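/- Let m ≥ 3 be odd. For a weight value w, let A_w = #{(a,b) ∈ F_{2^m} × F_{2^m} : wt(c(a,b)) = w}, where wt(c(a,b)) = #{(x,y) ∈ D_2 : Tr(axy + bx) = 1}. Then A_0 = 1 (attained only by (a,b) = (0,0)), A_{2^m(2^{m−2}−1)} = 2^{m−2}(2^{m−1} − 1), A_{2^{m−1}(2^{m−1}−1)} = 3·2^{2m−2}, A_{2^{2m−2}} = 2^{m−2}(2^{m−1} + 1) − 1, and A_w = 0 for every other value of w. In particular, the code C_{D_2} has length 2^m(2^{m−1} − 1), exactly 2^{2m} codewords, minimum distance 2^m(2^{m−2} − 1), and exactly three nonzero weights. -/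

import Mathlib

attribute [local instance] Classical.propDecidable

noncomputable instance (m : ℕ) : Fintype (GaloisField 2 m) := Fintype.ofFinite _

/-- The absolute trace map from `F_{2^m}` to `F_2`. -/
noncomputable def Tr (m : ℕ) (x : GaloisField 2 m) : ZMod 2 :=
  Algebra.trace (ZMod 2) (GaloisField 2 m) x

/-- For `t ∈ F_2`, `sgn t` is the integer `(-1)^t`. -/
def sgn : ZMod 2 → ℤ := fun t => if t = 0 then 1 else -1

/-- The set `Υ₁ = {r + r⁻¹ : r ∈ F_{2^m}^*, r ≠ 1}`. -/
def Ups1 (m : ℕ) : Set (GaloisField 2 m) :=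
  {u | ∃ r : GaloisField 2 m, r ≠ 0 ∧ r ≠ 1 ∧ u = r + r⁻¹}

abbrev GF (m : ℕ) := GaloisField 2 m

namespace Aux
open Finset
variable {m : ℕ}

lemma two_eq_zero : (2 : GF m) = 0 := by
  have := CharP.cast_eq_zero (GF m) 2; exact_mod_cast this

lemma char2 (x : GF m) : x + x = 0 := by linear_combination x * (two_eq_zero (m := m))

lemma add_eq_zero_iff {x y : GF m} : x + y = 0 ↔ x = y := by
  constructor
  · intro h; linear_combination h - y * (two_eq_zero (m := m))
  · rintro rfl; exact char2 x

lemma zmod2_cases : ∀ v : ZMod 2, v = 0 ∨ v = 1 := by decide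

lemma Tr_add (x y : GF m) : Tr m (x + y) = Tr m x + Tr m y := map_add _ _ _

lemma Tr_zero : Tr m (0 : GF m) = 0 := map_zero _

lemma Tr_one (hodd : Odd m) : Tr m (1 : GF m) = 1 := by
  rw [Tr, show (1 : GF m) = algebraMap (ZMod 2) _ 1 by simp, Algebra.trace_algebraMap]
  have hm : m ≠ 0 := by rintro rfl; simp at hodd
  rw [GaloisField.finrank 2 hm]
  obtain ⟨k, rfl⟩ := hodd
  rw [nsmul_eq_mul, mul_one]
  push_cast
  rw [show ((2 : ZMod 2)) = 0 from by decide]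
  ring

lemma Tr_exists_one {c : GF m} (hc : c ≠ 0) : ∃ u, Tr m (c * u) = 1 := by
  have h := (traceForm_nondegenerate (ZMod 2) (GF m)).1 c
  simp_rw [Algebra.traceForm_apply] at h
  by_contra! hf
  apply hc; apply h
  intro u
  rcases zmod2_cases (Tr m (c * u)) with h0 | h1
  · exact h0
  · exact absurd h1 (hf u)

lemma card_GF (hm : m ≠ 0) : Fintype.card (GF m) = 2 ^ m := by
  rw [← Nat.card_eq_fintype_card, GaloisField.card 2 m hm]

lemma fiber_card {α M : Type*} [Fintype α] [AddCommGroup α] [Fintype M] [AddCommGroup M]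
    [DecidableEq M] (f : α → M) (hadd : ∀ x y, f (x + y) = f x + f y)
    (hsurj : Function.Surjective f) (v : M) :
    (Finset.univ.filter fun y => f y = v).card * Fintype.card M = Fintype.card α := by
  classical
  have key : ∀ v w : M, (Finset.univ.filter fun y => f y = v).card ≤
      (Finset.univ.filter fun y => f y = w).card := by
    intro v w
    obtain ⟨y0, hy0⟩ := hsurj (w - v)
    apply Finset.card_le_card_of_injOn (fun y => y + y0)
    · intro y hy
      simp only [mem_coe, mem_filter, mem_univ, true_and] at hy ⊢
      rw [hadd, hy, hy0]; abel
    · intro a _ b _ h; exact add_right_cancel h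
  have heq : ∀ w : M, (Finset.univ.filter fun y => f y = w).card =
      (Finset.univ.filter fun y => f y = v).card :=
    fun w => le_antisymm (key w v) (key v w)
  have htot : (Finset.univ : Finset α).card =
      ∑ w : M, (Finset.univ.filter fun y => f y = w).card :=
    Finset.card_eq_sum_card_fiberwise (fun y _ => Finset.mem_univ (f y))
  rw [Finset.card_univ] at htot
  rw [htot, Finset.sum_congr rfl fun w _ => heq w, Finset.sum_const, Finset.card_univ,
    smul_eq_mul, mul_comm]

end Aux

namespace Aux
open Finset
variable {m : ℕ}

lemma zmod2_arith : ∀ x y : ZMod 2, x + y = 1 → x = 1 → y = 0 := by decide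

lemma count1 (hm : m ≠ 0) {c : GF m} (hc : c ≠ 0) (ε : ZMod 2) :
    (Finset.univ.filter fun y => Tr m (c * y) = ε).card = 2 ^ (m - 1) := by
  have hadd : ∀ x y : GF m, Tr m (c * (x + y)) = Tr m (c * x) + Tr m (c * y) := by
    intro x y; rw [mul_add, Tr_add]
  have hsurj : Function.Surjective (fun y => Tr m (c * y)) := by
    intro v
    obtain ⟨u, hu⟩ := Tr_exists_one hc
    rcases zmod2_cases v with rfl | rfl
    · exact ⟨0, by simp [Tr_zero]⟩
    · exact ⟨u, hu⟩
  have h := fiber_card (fun y => Tr m (c * y)) hadd hsurj ε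
  rw [card_GF hm] at h
  have hcard : Fintype.card (ZMod 2) = 2 := by simp
  rw [hcard] at h
  have h2 : 2 ^ m = 2 ^ (m - 1) * 2 := by
    rw [← pow_succ]; congr 1; omega
  omega

lemma pair_surj {c d : GF m} (hc : c ≠ 0) (hd : d ≠ 0) (hcd : c ≠ d) :
    Function.Surjective (fun y : GF m => (Tr m (c * y), Tr m (d * y))) := by
  obtain ⟨u, hu⟩ := Tr_exists_one hc
  obtain ⟨v, hv⟩ := Tr_exists_one hd
  have hcd0 : c + d ≠ 0 := fun h => hcd (add_eq_zero_iff.mp h)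
  obtain ⟨w, hw⟩ := Tr_exists_one hcd0
  have hw' : Tr m (c * w) + Tr m (d * w) = 1 := by
    rw [← Tr_add, ← add_mul]; exact hw
  have h10 : ∃ y, Tr m (c * y) = 1 ∧ Tr m (d * y) = 0 := by
    rcases zmod2_cases (Tr m (d * u)) with h1 | h1
    · exact ⟨u, hu, h1⟩
    · rcases zmod2_cases (Tr m (c * w)) with h2 | h2
      · refine ⟨u + w, ?_, ?_⟩
        · rw [mul_add, Tr_add, hu, h2]; decide
        · have h3 : Tr m (d * w) = 1 := by rw [h2] at hw'; simpa using hw'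
          rw [mul_add, Tr_add, h1, h3]; decide
      · exact ⟨w, h2, zmod2_arith _ _ hw' h2⟩
  have h01 : ∃ y, Tr m (c * y) = 0 ∧ Tr m (d * y) = 1 := by
    rcases zmod2_cases (Tr m (c * v)) with h1 | h1
    · exact ⟨v, h1, hv⟩
    · rcases zmod2_cases (Tr m (d * w)) with h2 | h2
      · have h3 : Tr m (c * w) = 1 := by
          rcases zmod2_cases (Tr m (c * w)) with h4 | h4
          · rw [h4, h2] at hw'; exact absurd hw' (by decide)
          · exact h4
        refine ⟨v + w, ?_, ?_⟩
        · rw [mul_add, Tr_add, h1, h3]; decide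
        · rw [mul_add, Tr_add, hv, h2]; decide
      · have h3 : Tr m (c * w) = 0 := by
          rcases zmod2_cases (Tr m (c * w)) with h4 | h4
          · exact h4
          · rw [h4, h2] at hw'; exact absurd hw' (by decide)
        exact ⟨w, h3, h2⟩
  obtain ⟨y1, hy1c, hy1d⟩ := h10
  obtain ⟨y2, hy2c, hy2d⟩ := h01
  rintro ⟨ε1, ε2⟩
  rcases zmod2_cases ε1 with rfl | rfl <;> rcases zmod2_cases ε2 with rfl | rfl
  · exact ⟨0, by simp [Tr_zero]⟩
  · exact ⟨y2, by simp [hy2c, hy2d]⟩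
  · exact ⟨y1, by simp [hy1c, hy1d]⟩
  · refine ⟨y1 + y2, ?_⟩
    simp only [mul_add, Tr_add, hy1c, hy1d, hy2c, hy2d, Prod.mk.injEq]
    constructor <;> decide

lemma count2 (hm2 : 2 ≤ m) {c d : GF m} (hc : c ≠ 0) (hd : d ≠ 0) (hcd : c ≠ d)
    (ε1 ε2 : ZMod 2) :
    (Finset.univ.filter fun y => Tr m (c * y) = ε1 ∧ Tr m (d * y) = ε2).card = 2 ^ (m - 2) := by
  have hadd : ∀ x y : GF m,
      (Tr m (c * (x + y)), Tr m (d * (x + y))) = (Tr m (c * x), Tr m (d * x)) + (Tr m (c * y), Tr m (d * y)) := by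
    intro x y; simp [mul_add, Tr_add, Prod.ext_iff]
  have h := fiber_card (fun y : GF m => (Tr m (c * y), Tr m (d * y))) hadd (pair_surj hc hd hcd) (ε1, ε2)
  have hM : Fintype.card (ZMod 2 × ZMod 2) = 4 := by simp
  rw [card_GF (by omega), hM] at h
  have hfilter : (Finset.univ.filter fun y => Tr m (c * y) = ε1 ∧ Tr m (d * y) = ε2) =
      (Finset.univ.filter fun y : GF m => (Tr m (c * y), Tr m (d * y)) = (ε1, ε2)) := by
    apply Finset.filter_congr; intro y _; simp [Prod.ext_iff]
  rw [hfilter] at *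
  have h2 : 2 ^ m = 2 ^ (m - 2) * 4 := by
    rw [show (4:ℕ) = 2^2 from rfl, ← pow_add]; congr 1; omega
  omega

end Aux

namespace Aux
open Finset
variable {m : ℕ}

section Roots
variable {a r : GF m}

lemma root_ne_zero (hr : r ^ 2 + a * r + 1 = 0) : r ≠ 0 := by
  rintro rfl
  simp at hr

lemma root_ne_one (ha : a ≠ 0) (hr : r ^ 2 + a * r + 1 = 0) : r ≠ 1 := by
  rintro rfl
  apply ha
  have h2 := two_eq_zero (m := m)
  linear_combination hr - h2

lemma root_sum (hr : r ^ 2 + a * r + 1 = 0) : a = r + r⁻¹ := by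
  have hr0 : r ≠ 0 := root_ne_zero hr
  have hrr : r * r⁻¹ = 1 := mul_inv_cancel₀ hr0
  linear_combination r⁻¹ * hr - (r + a) * hrr - (r + r⁻¹) * (two_eq_zero (m := m))

lemma root_inv (hr : r ^ 2 + a * r + 1 = 0) : (r⁻¹) ^ 2 + a * r⁻¹ + 1 = 0 := by
  have hr0 : r ≠ 0 := root_ne_zero hr
  have hrr : r * r⁻¹ = 1 := mul_inv_cancel₀ hr0
  have hsum : a = r + r⁻¹ := root_sum hr
  linear_combination r⁻¹ * hsum + hrr + (r⁻¹ ^ 2 + 1) * (two_eq_zero (m := m))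

lemma root_inv_ne (ha : a ≠ 0) (hr : r ^ 2 + a * r + 1 = 0) : r⁻¹ ≠ r := by
  intro h
  have hr0 : r ≠ 0 := root_ne_zero hr
  have hrr : r * r⁻¹ = 1 := mul_inv_cancel₀ hr0
  rw [h] at hrr
  have h1 : (r + 1) ^ 2 = 0 := by
    linear_combination hrr + (r + 1) * (two_eq_zero (m := m))
  have h2 : r + 1 = 0 := by
    exact pow_eq_zero_iff (by norm_num) |>.mp h1
  exact root_ne_one ha hr (add_eq_zero_iff.mp h2)

lemma root_all (hr : r ^ 2 + a * r + 1 = 0) {s : GF m} (hs : s ^ 2 + a * s + 1 = 0) :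
    s = r ∨ s = r⁻¹ := by
  have hr0 : r ≠ 0 := root_ne_zero hr
  have hsum : a = r + r⁻¹ := root_sum hr
  have key : (s + r) * (s + r + a) = 0 := by
    linear_combination hs + hr + (s * r - 1) * (two_eq_zero (m := m))
  rcases mul_eq_zero.mp key with h | h
  · left; exact (add_eq_zero_iff.mp h)
  · right
    have h2 : s + r = a := add_eq_zero_iff.mp h
    linear_combination h2 + hsum

end Roots
end Aux

namespace Aux
open Finset
variable {m : ℕ}

lemma sum_root (hr0 : r ≠ (0 : GF m)) : r ^ 2 + (r + r⁻¹) * r + 1 = 0 := by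
  have hrr : r * r⁻¹ = 1 := mul_inv_cancel₀ hr0
  linear_combination hrr + (r ^ 2 + 1) * (two_eq_zero (m := m))

lemma sum_ne_zero (hr0 : r ≠ (0 : GF m)) (hr1 : r ≠ 1) : r + r⁻¹ ≠ 0 := by
  intro h
  have h1 : r = r⁻¹ := add_eq_zero_iff.mp h
  have hrr : r * r⁻¹ = 1 := mul_inv_cancel₀ hr0
  rw [← h1] at hrr
  have h2 : (r + 1) ^ 2 = 0 := by
    linear_combination hrr + (r + 1) * (two_eq_zero (m := m))
  exact hr1 (add_eq_zero_iff.mp (pow_eq_zero_iff (by norm_num) |>.mp h2))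

lemma roots_filter_eq {a r : GF m} (ha : a ≠ 0) (hr : r ^ 2 + a * r + 1 = 0) :
    (Finset.univ.filter fun x : GF m => x ^ 2 + a * x + 1 = 0) = {r, r⁻¹} := by
  ext s
  simp only [mem_filter, mem_univ, true_and, mem_insert, mem_singleton]
  constructor
  · intro hs; exact root_all hr hs
  · rintro (rfl | rfl)
    · exact hr
    · exact root_inv hr

lemma card_pair_GF (hm : m ≠ 0) : ((Finset.univ : Finset (GF m)) \ {0, 1}).card = 2 ^ m - 2 := by
  rw [Finset.card_sdiff_of_subset (Finset.subset_univ _), Finset.card_univ, card_GF hm]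
  congr 1
  rw [Finset.card_insert_of_notMem (by simp), Finset.card_singleton]

lemma card_good_a (hm : m ≠ 0) :
    (Finset.univ.filter fun a : GF m => a ≠ 0 ∧ ∃ r, r ^ 2 + a * r + 1 = 0).card
      = 2 ^ (m - 1) - 1 := by
  classical
  set S := Finset.univ.filter fun a : GF m => a ≠ 0 ∧ ∃ r, r ^ 2 + a * r + 1 = 0 with hS
  set T := (Finset.univ : Finset (GF m)) \ {0, 1} with hT
  have hmem : ∀ x ∈ T, (x + x⁻¹) ∈ S := by
    intro x hx
    simp only [hT, Finset.mem_sdiff, Finset.mem_insert, Finset.mem_singleton] at hx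
    push_neg at hx
    obtain ⟨-, hx0, hx1⟩ := hx
    simp only [hS, mem_filter, mem_univ, true_and]
    exact ⟨sum_ne_zero hx0 hx1, x, sum_root hx0⟩
  have hfib : ∀ a ∈ S, (T.filter fun x => x + x⁻¹ = a).card = 2 := by
    intro a haS
    simp only [hS, mem_filter, mem_univ, true_and] at haS
    obtain ⟨ha, r, hr⟩ := haS
    have hr0 := root_ne_zero hr
    have hr1 := root_ne_one ha hr
    have hrinv := root_inv_ne ha hr
    have hri0 : r⁻¹ ≠ 0 := inv_ne_zero hr0
    have hri1 : r⁻¹ ≠ 1 := by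
      intro h; apply hr1; rw [← inv_inv r, h, inv_one]
    have : (T.filter fun x => x + x⁻¹ = a) = {r, r⁻¹} := by
      ext s
      simp only [hT, Finset.mem_filter, Finset.mem_sdiff, Finset.mem_insert,
        Finset.mem_singleton, Finset.mem_univ, true_and]
      constructor
      · rintro ⟨hs01, hsum⟩
        push_neg at hs01
        obtain ⟨hs0, hs1⟩ := hs01
        have hroot : s ^ 2 + a * s + 1 = 0 := by
          rw [← hsum]; exact sum_root hs0
        exact root_all hr hroot
      · rintro (rfl | rfl)
        · exact ⟨by push_neg; exact ⟨hr0, hr1⟩, (root_sum hr).symm⟩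
        · refine ⟨by push_neg; exact ⟨hri0, hri1⟩, ?_⟩
          rw [inv_inv]
          rw [add_comm]
          exact (root_sum hr).symm
    rw [this, Finset.card_insert_of_notMem (by simpa using hrinv.symm), Finset.card_singleton]
  have hcount : T.card = ∑ a ∈ S, (T.filter fun x => x + x⁻¹ = a).card :=
    Finset.card_eq_sum_card_fiberwise hmem
  rw [Finset.sum_congr rfl hfib, Finset.sum_const, smul_eq_mul] at hcount
  rw [card_pair_GF hm] at hcount
  have h2 : 2 ^ m = 2 ^ (m - 1) * 2 := by rw [← pow_succ]; congr 1; omega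
  have h3 : 1 ≤ 2 ^ (m - 1) := Nat.one_le_two_pow
  omega

end Aux

namespace Aux
open Finset
variable {m : ℕ}

lemma z2_add_eq_zero : ∀ u v : ZMod 2, u + v = 0 ↔ u = v := by decide
lemma z2_add_eq_one : ∀ u v : ZMod 2, u + v = 1 ↔ u = 1 + v := by decide

/-- inner count for fixed x -/
lemma inner_count (hm : 3 ≤ m) (hodd : Odd m) (a b x : GF m) :
    (Finset.univ.filter fun y : GF m =>
        x ≠ 0 ∧ Tr m (y * x ^ 2 + x + y) = 0 ∧ Tr m (a * x * y + b * x) = 1).card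
    = if x = 0 ∨ x = 1 then 0
      else if a = 0 then (if Tr m (b * x) = 1 then 2 ^ (m - 1) else 0)
      else if x ^ 2 + a * x + 1 = 0 then (if Tr m ((1 + b) * x) = 1 then 2 ^ (m - 1) else 0)
      else 2 ^ (m - 2) := by
  by_cases hx0 : x = 0
  · subst hx0
    simp
  by_cases hx1 : x = 1
  · subst hx1
    have hval : ∀ y : GF m, y * 1 ^ 2 + 1 + y = (1 : GF m) := by
      intro y; linear_combination y * (two_eq_zero (m := m))
    have : (Finset.univ.filter fun y : GF m =>
        (1 : GF m) ≠ 0 ∧ Tr m (y * 1 ^ 2 + 1 + y) = 0 ∧ Tr m (a * 1 * y + b * 1) = 1) = ∅ := by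
      apply Finset.filter_false_of_mem
      intro y _
      rw [hval y, Tr_one hodd]
      rintro ⟨-, h, -⟩
      exact one_ne_zero h
    rw [this]
    simp
  -- main case
  have hcne : x ^ 2 + 1 ≠ 0 := by
    intro h
    apply hx1
    have h2 : (x + 1) ^ 2 = 0 := by
      linear_combination h + x * (two_eq_zero (m := m))
    exact add_eq_zero_iff.mp (pow_eq_zero_iff (by norm_num) |>.mp h2)
  have hpred : ∀ y : GF m,
      (x ≠ 0 ∧ Tr m (y * x ^ 2 + x + y) = 0 ∧ Tr m (a * x * y + b * x) = 1) ↔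
      (Tr m ((x ^ 2 + 1) * y) = Tr m x ∧ Tr m ((a * x) * y) = 1 + Tr m (b * x)) := by
    intro y
    have e1 : y * x ^ 2 + x + y = (x ^ 2 + 1) * y + x := by ring
    have e2 : a * x * y + b * x = (a * x) * y + b * x := by ring
    rw [e1, e2, Tr_add, Tr_add, z2_add_eq_zero, z2_add_eq_one]
    tauto
  rw [Finset.filter_congr fun y _ => hpred y]
  rw [if_neg (by tauto)]
  by_cases ha : a = 0
  · subst ha
    rw [if_pos rfl]
    by_cases hb : Tr m (b * x) = 1
    · rw [if_pos hb]
      have : ∀ y : GF m, (Tr m ((x ^ 2 + 1) * y) = Tr m x ∧ Tr m ((0 * x) * y) = 1 + Tr m (b * x))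
          ↔ Tr m ((x ^ 2 + 1) * y) = Tr m x := by
        intro y
        rw [hb, zero_mul, zero_mul, Tr_zero]
        constructor
        · tauto
        · intro h; exact ⟨h, by decide⟩
      rw [Finset.filter_congr fun y _ => this y]
      exact count1 (by omega) hcne _
    · rw [if_neg hb]
      have hb0 : Tr m (b * x) = 0 := (zmod2_cases _).resolve_right hb
      rw [Finset.filter_false_of_mem, Finset.card_empty]
      intro y _
      rintro ⟨-, h⟩
      rw [zero_mul, zero_mul, Tr_zero, hb0] at h
      exact absurd h (by decide)
  · rw [if_neg ha]
    by_cases hroot : x ^ 2 + a * x + 1 = 0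
    · rw [if_pos hroot]
      have hax : a * x = x ^ 2 + 1 := by
        linear_combination hroot - x ^ 2 * (two_eq_zero (m := m)) - (two_eq_zero (m := m))
      have htr : Tr m ((1 + b) * x) = Tr m x + Tr m (b * x) := by
        rw [add_mul, one_mul, Tr_add]
      by_cases hk : Tr m ((1 + b) * x) = 1
      · rw [if_pos hk]
        have hxb : Tr m x = 1 + Tr m (b * x) := by
          rw [htr] at hk
          exact (z2_add_eq_one _ _).mp hk
        have : ∀ y : GF m,
            (Tr m ((x ^ 2 + 1) * y) = Tr m x ∧ Tr m ((a * x) * y) = 1 + Tr m (b * x))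
            ↔ Tr m ((x ^ 2 + 1) * y) = Tr m x := by
          intro y
          rw [hax, ← hxb]
          tauto
        rw [Finset.filter_congr fun y _ => this y]
        exact count1 (by omega) hcne _
      · rw [if_neg hk]
        have hxb : Tr m x ≠ 1 + Tr m (b * x) := by
          intro h
          apply hk
          rw [htr, h]
          generalize Tr m (b * x) = v
          revert v; decide
        rw [Finset.filter_false_of_mem, Finset.card_empty]
        intro y _
        rintro ⟨h1, h2⟩
        rw [hax] at h2
        rw [h1] at h2
        exact hxb h2
    · rw [if_neg hroot]
      have hd : a * x ≠ 0 := mul_ne_zero ha hx0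
      have hcd : x ^ 2 + 1 ≠ a * x := by
        intro h
        apply hroot
        linear_combination h + a * x * (two_eq_zero (m := m))
      exact count2 (by omega) hcne hd hcd _ _
end Aux

namespace Aux
open Finset
variable {m : ℕ}

lemma sum_ite_card {α : Type*} [Fintype α] (p : α → Prop) [DecidablePred p] (c : ℕ) :
    (∑ x : α, if p x then c else 0) = c * (Finset.univ.filter p).card := by
  rw [← Finset.sum_filter, Finset.sum_const, smul_eq_mul, mul_comm]

lemma card_filter_not01 (hm : m ≠ 0) {s : Finset (GF m)} (h0 : (0 : GF m) ∈ s)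
    (h1 : (1 : GF m) ∈ s) :
    (s.filter fun x => ¬(x = 0 ∨ x = 1)).card = s.card - 2 := by
  have he : (s.filter fun x => ¬(x = 0 ∨ x = 1)) = (s.erase 0).erase 1 := by
    ext x
    simp only [mem_filter, mem_erase]
    push_neg
    tauto
  rw [he, Finset.card_erase_of_mem (by rw [mem_erase]; exact ⟨one_ne_zero, h1⟩),
    Finset.card_erase_of_mem h0]
  omega

lemma sum_g_b0 (hm : 3 ≤ m) :
    (∑ x : GF m, if x = 0 ∨ x = 1 then 0
      else if Tr m ((0 : GF m) * x) = 1 then 2 ^ (m - 1) else 0) = 0 := by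
  apply Finset.sum_eq_zero
  intro x _
  split_ifs with h1 h2
  · rfl
  · rw [zero_mul, Tr_zero] at h2; exact absurd h2 (by decide)
  · rfl

lemma sum_g_a0 (hm : 3 ≤ m) {b : GF m} (hb : b ≠ 0) :
    (∑ x : GF m, if x = 0 ∨ x = 1 then 0
      else if Tr m (b * x) = 1 then 2 ^ (m - 1) else 0)
    = 2 ^ (m - 1) * (2 ^ (m - 1) - (if Tr m b = 1 then 1 else 0)) := by
  have hstep : (∑ x : GF m, if x = 0 ∨ x = 1 then 0
      else if Tr m (b * x) = 1 then 2 ^ (m - 1) else 0)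
      = ∑ x : GF m, if (¬(x = 0 ∨ x = 1) ∧ Tr m (b * x) = 1) then 2 ^ (m - 1) else 0 := by
    apply Finset.sum_congr rfl
    intro x _
    split_ifs <;> tauto
  rw [hstep, sum_ite_card]
  have hQ0 : ¬ (Tr m (b * (0 : GF m)) = 1) := by
    rw [mul_zero, Tr_zero]; decide
  by_cases htb : Tr m b = 1
  · rw [if_pos htb]
    have he : (Finset.univ.filter fun x : GF m => ¬(x = 0 ∨ x = 1) ∧ Tr m (b * x) = 1)
        = (Finset.univ.filter fun x : GF m => Tr m (b * x) = 1).erase 1 := by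
      ext x
      simp only [mem_filter, mem_erase, mem_univ, true_and]
      constructor
      · rintro ⟨h01, hq⟩; push_neg at h01; exact ⟨h01.2, hq⟩
      · rintro ⟨hx1, hq⟩
        refine ⟨?_, hq⟩
        push_neg
        refine ⟨?_, hx1⟩
        rintro rfl; exact hQ0 hq
    rw [he, Finset.card_erase_of_mem (by simp only [mem_filter, mem_univ, true_and, mul_one]; exact htb),
      count1 (show m ≠ 0 by omega) hb]
  · rw [if_neg htb]
    have he : (Finset.univ.filter fun x : GF m => ¬(x = 0 ∨ x = 1) ∧ Tr m (b * x) = 1)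
        = (Finset.univ.filter fun x : GF m => Tr m (b * x) = 1) := by
      ext x
      simp only [mem_filter, mem_univ, true_and]
      constructor
      · tauto
      · intro hq
        refine ⟨?_, hq⟩
        push_neg
        constructor
        · rintro rfl; exact hQ0 hq
        · rintro rfl; rw [mul_one] at hq; exact htb hq
    rw [he, count1 (show m ≠ 0 by omega) hb, Nat.sub_zero]

lemma sum_g_noroot (hm : 3 ≤ m) {a : GF m} (ha : a ≠ 0)
    (hnr : ∀ r : GF m, r ^ 2 + a * r + 1 ≠ 0) (b : GF m) :
    (∑ x : GF m, if x = 0 ∨ x = 1 then 0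
      else if x ^ 2 + a * x + 1 = 0 then (if Tr m ((1 + b) * x) = 1 then 2 ^ (m - 1) else 0)
      else 2 ^ (m - 2))
    = (2 ^ m - 2) * 2 ^ (m - 2) := by
  have hstep : ∀ x : GF m, (if x = 0 ∨ x = 1 then 0
      else if x ^ 2 + a * x + 1 = 0 then (if Tr m ((1 + b) * x) = 1 then 2 ^ (m - 1) else 0)
      else 2 ^ (m - 2)) = if ¬(x = 0 ∨ x = 1) then 2 ^ (m - 2) else 0 := by
    intro x
    split_ifs with h1 h2 <;> first | rfl | (exact absurd h2 (hnr x)) | tauto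
  rw [Finset.sum_congr rfl fun x _ => hstep x, sum_ite_card,
    card_filter_not01 (by omega) (mem_univ _) (mem_univ _), Finset.card_univ, card_GF (by omega),
    mul_comm]

lemma sum_g_root (hm : 3 ≤ m) {a r : GF m} (ha : a ≠ 0) (hr : r ^ 2 + a * r + 1 = 0) (b : GF m) :
    (∑ x : GF m, if x = 0 ∨ x = 1 then 0
      else if x ^ 2 + a * x + 1 = 0 then (if Tr m ((1 + b) * x) = 1 then 2 ^ (m - 1) else 0)
      else 2 ^ (m - 2))
    = (2 ^ m - 4) * 2 ^ (m - 2)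
      + ((if Tr m ((1 + b) * r) = 1 then 2 ^ (m - 1) else 0)
        + (if Tr m ((1 + b) * r⁻¹) = 1 then 2 ^ (m - 1) else 0)) := by
  classical
  set f : GF m → ℕ := fun x => if x = 0 ∨ x = 1 then 0
      else if x ^ 2 + a * x + 1 = 0 then (if Tr m ((1 + b) * x) = 1 then 2 ^ (m - 1) else 0)
      else 2 ^ (m - 2) with hf
  have hsplit := Finset.sum_filter_add_sum_filter_not Finset.univ
    (fun x : GF m => x ^ 2 + a * x + 1 = 0) f
  have hr0 := root_ne_zero hr
  have hr1 := root_ne_one ha hr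
  have hrinv := root_inv_ne ha hr
  have hri0 : r⁻¹ ≠ 0 := inv_ne_zero hr0
  have hri1 : r⁻¹ ≠ 1 := fun h => hr1 (by rw [← inv_inv r, h, inv_one])
  have hfilter : (Finset.univ.filter fun x : GF m => x ^ 2 + a * x + 1 = 0) = {r, r⁻¹} :=
    roots_filter_eq ha hr
  have hroots_sum : (∑ x ∈ Finset.univ.filter (fun x : GF m => x ^ 2 + a * x + 1 = 0), f x)
      = (if Tr m ((1 + b) * r) = 1 then 2 ^ (m - 1) else 0)
        + (if Tr m ((1 + b) * r⁻¹) = 1 then 2 ^ (m - 1) else 0) := by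
    rw [hfilter, Finset.sum_pair hrinv.symm]
    congr 1
    · rw [hf]
      simp only
      rw [if_neg (by push_neg; exact ⟨hr0, hr1⟩), if_pos hr]
    · rw [hf]
      simp only
      rw [if_neg (by push_neg; exact ⟨hri0, hri1⟩), if_pos (root_inv hr)]
  have hnot0 : ¬ ((0 : GF m) ^ 2 + a * 0 + 1 = 0) := by
    intro h; simp at h
  have hnot1 : ¬ ((1 : GF m) ^ 2 + a * 1 + 1 = 0) := by
    intro h
    apply ha
    linear_combination h - (two_eq_zero (m := m))
  have hother : (∑ x ∈ Finset.univ.filter (fun x : GF m => ¬(x ^ 2 + a * x + 1 = 0)), f x)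
      = (2 ^ m - 4) * 2 ^ (m - 2) := by
    have hstep : ∀ x ∈ Finset.univ.filter (fun x : GF m => ¬(x ^ 2 + a * x + 1 = 0)),
        f x = if ¬(x = 0 ∨ x = 1) then 2 ^ (m - 2) else 0 := by
      intro x hx
      simp only [mem_filter, mem_univ, true_and] at hx
      rw [hf]
      simp only
      split_ifs <;> tauto
    rw [Finset.sum_congr rfl hstep, ← Finset.sum_filter, Finset.sum_const, smul_eq_mul]
    have h0mem : (0 : GF m) ∈ Finset.univ.filter (fun x : GF m => ¬(x ^ 2 + a * x + 1 = 0)) := by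
      simp only [mem_filter, mem_univ, true_and]; exact hnot0
    have h1mem : (1 : GF m) ∈ Finset.univ.filter (fun x : GF m => ¬(x ^ 2 + a * x + 1 = 0)) := by
      simp only [mem_filter, mem_univ, true_and]; exact hnot1
    rw [card_filter_not01 (show m ≠ 0 by omega) h0mem h1mem]
    have hcardnr : (Finset.univ.filter fun x : GF m => ¬(x ^ 2 + a * x + 1 = 0)).card
        = 2 ^ m - 2 := by
      rw [Finset.filter_not, Finset.card_sdiff_of_subset (Finset.filter_subset _ _), Finset.card_univ,
        card_GF (show m ≠ 0 by omega), hfilter,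
        Finset.card_insert_of_notMem (by simpa using hrinv.symm), Finset.card_singleton]
    rw [hcardnr]
    have hpow : (8 : ℕ) ≤ 2 ^ m := by
      calc (8:ℕ) = 2 ^ 3 := rfl
      _ ≤ 2 ^ m := Nat.pow_le_pow_right (by norm_num) hm
    have : 2 ^ m - 2 - 2 = 2 ^ m - 4 := by omega
    rw [this, mul_comm]
  rw [← hsplit, hroots_sum, hother, Nat.add_comm]
end Aux

namespace Aux
open Finset
variable {m : ℕ}

lemma card_prod_split {α β : Type*} [Fintype α] [Fintype β] (P : α × β → Prop)
    [DecidablePred P] :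
    (Finset.univ.filter P).card = ∑ x : α, (Finset.univ.filter fun y : β => P (x, y)).card := by
  rw [Finset.card_filter, Fintype.sum_prod_type]
  exact Finset.sum_congr rfl fun x _ => (Finset.card_filter _ _).symm

lemma count_shift (p : GF m → Prop) [DecidablePred p] [DecidablePred (fun b => p (1 + b))] :
    (Finset.univ.filter fun b : GF m => p (1 + b)).card = (Finset.univ.filter p).card := by
  apply Finset.card_nbij' (fun b => 1 + b) (fun b => 1 + b)
  · intro x hx
    simp only [mem_coe, mem_filter, mem_univ, true_and] at hx ⊢
    exact hx
  · intro x hx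
    simp only [mem_coe, mem_filter, mem_univ, true_and] at hx ⊢
    have : 1 + (1 + x) = x := by
      linear_combination (two_eq_zero (m := m))
    rw [this]
    exact hx
  · intro x _
    linear_combination (two_eq_zero (m := m))
  · intro x _
    linear_combination (two_eq_zero (m := m))

lemma wt_eq_sum (a b : GF m) :
    ((Finset.univ.filter (fun p : GF m × GF m =>
        p.1 ≠ 0 ∧ Tr m (p.2 * p.1 ^ 2 + p.1 + p.2) = 0)).filter
      (fun p => Tr m (a * p.1 * p.2 + b * p.1) = 1)).card
    = ∑ x : GF m, (Finset.univ.filter fun y : GF m =>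
        x ≠ 0 ∧ Tr m (y * x ^ 2 + x + y) = 0 ∧ Tr m (a * x * y + b * x) = 1).card := by
  rw [Finset.filter_filter]
  rw [card_prod_split]
  apply Finset.sum_congr rfl
  intro x _
  congr 1
  apply Finset.filter_congr
  intro y _
  tauto

lemma D2_card (hm : 3 ≤ m) (hodd : Odd m) :
    (Finset.univ.filter (fun p : GF m × GF m =>
        p.1 ≠ 0 ∧ Tr m (p.2 * p.1 ^ 2 + p.1 + p.2) = 0)).card
    = 2 ^ m * (2 ^ (m - 1) - 1) := by
  rw [card_prod_split]
  have hinner : ∀ x : GF m, (Finset.univ.filter fun y : GF m =>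
      x ≠ 0 ∧ Tr m (y * x ^ 2 + x + y) = 0).card
      = if x = 0 ∨ x = 1 then 0 else 2 ^ (m - 1) := by
    intro x
    by_cases hx0 : x = 0
    · subst hx0; simp
    by_cases hx1 : x = 1
    · subst hx1
      rw [if_pos (Or.inr rfl)]
      rw [Finset.filter_false_of_mem, Finset.card_empty]
      intro y _
      have hval : y * 1 ^ 2 + 1 + y = (1 : GF m) := by
        linear_combination y * (two_eq_zero (m := m))
      rintro ⟨-, h⟩
      rw [hval, Tr_one hodd] at h
      exact one_ne_zero h
    · rw [if_neg (by tauto)]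
      have hcne : x ^ 2 + 1 ≠ 0 := by
        intro h
        apply hx1
        have h2 : (x + 1) ^ 2 = 0 := by
          linear_combination h + x * (two_eq_zero (m := m))
        exact add_eq_zero_iff.mp (pow_eq_zero_iff (by norm_num) |>.mp h2)
      have hpred : ∀ y : GF m,
          (x ≠ 0 ∧ Tr m (y * x ^ 2 + x + y) = 0) ↔ Tr m ((x ^ 2 + 1) * y) = Tr m x := by
        intro y
        have e1 : y * x ^ 2 + x + y = (x ^ 2 + 1) * y + x := by ring
        rw [e1, Tr_add, z2_add_eq_zero]
        tauto
      rw [Finset.filter_congr fun y _ => hpred y]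
      exact count1 (by omega) hcne _
  rw [Finset.sum_congr rfl fun x _ => hinner x]
  have hstep : ∀ x : GF m, (if x = 0 ∨ x = 1 then 0 else 2 ^ (m - 1))
      = if ¬(x = 0 ∨ x = 1) then 2 ^ (m - 1) else 0 := by
    intro x; split_ifs <;> tauto
  rw [Finset.sum_congr rfl fun x _ => hstep x, sum_ite_card,
    card_filter_not01 (by omega) (mem_univ _) (mem_univ _), Finset.card_univ, card_GF (by omega)]
  have h1 : 2 ^ m = 2 * 2 ^ (m - 1) := by rw [← pow_succ']; congr 1; omega
  have h2 : 1 ≤ 2 ^ (m - 1) := Nat.one_le_two_pow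
  rw [h1]
  zify [h2, show 2 ≤ 2 * 2 ^ (m - 1) by omega]
  ring
end Aux

noncomputable def W (m : ℕ) (a b : GaloisField 2 m) : ℕ :=
  ((Finset.univ.filter (fun p : GaloisField 2 m × GaloisField 2 m =>
      p.1 ≠ 0 ∧ Tr m (p.2 * p.1 ^ 2 + p.1 + p.2) = 0)).filter
    (fun p => Tr m (a * p.1 * p.2 + b * p.1) = 1)).card

namespace Aux
open Finset
variable {m : ℕ}

lemma hp1 (hm : 3 ≤ m) : 2 ^ (m - 1) = 2 * 2 ^ (m - 2) := by
  rw [← pow_succ']; congr 1; omega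

lemma hp2 (hm : 3 ≤ m) : 2 ^ m = 4 * 2 ^ (m - 2) := by
  rw [show (4:ℕ) = 2^2 from rfl, ← pow_add]; congr 1; omega

lemma hp3 (hm : 3 ≤ m) : 2 ^ (2 * m - 2) = 2 ^ (m - 1) * 2 ^ (m - 1) := by
  rw [← pow_add]; congr 1; omega

lemma hp5 (hm : 3 ≤ m) : 2 ≤ 2 ^ (m - 2) := by
  calc (2:ℕ) = 2 ^ 1 := rfl
  _ ≤ 2 ^ (m - 2) := Nat.pow_le_pow_right (by norm_num) (by omega)

lemma n_mid (hm : 3 ≤ m) : (2 ^ m - 2) * 2 ^ (m - 2) = 2 ^ (m - 1) * (2 ^ (m - 1) - 1) := by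
  have h5 := hp5 hm
  rw [hp1 hm, hp2 hm]
  zify [show 2 ≤ 4 * 2^(m-2) by omega, show 1 ≤ 2 * 2^(m-2) by omega]
  ring

lemma n_low (hm : 3 ≤ m) : (2 ^ m - 4) * 2 ^ (m - 2) = 2 ^ m * (2 ^ (m - 2) - 1) := by
  have h5 := hp5 hm
  rw [hp2 hm]
  zify [show 4 ≤ 4 * 2^(m-2) by omega, show 1 ≤ 2^(m-2) by omega]
  ring

lemma n_mid' (hm : 3 ≤ m) :
    2 ^ m * (2 ^ (m - 2) - 1) + 2 ^ (m - 1) = 2 ^ (m - 1) * (2 ^ (m - 1) - 1) := by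
  have h5 := hp5 hm
  rw [hp1 hm, hp2 hm]
  zify [show 1 ≤ 2^(m-2) by omega, show 1 ≤ 2 * 2^(m-2) by omega]
  ring

lemma n_high (hm : 3 ≤ m) :
    2 ^ m * (2 ^ (m - 2) - 1) + (2 ^ (m - 1) + 2 ^ (m - 1)) = 2 ^ (2 * m - 2) := by
  have h5 := hp5 hm
  rw [hp3 hm, hp1 hm, hp2 hm]
  zify [show 1 ≤ 2^(m-2) by omega]
  ring

lemma n_high' (hm : 3 ≤ m) : 2 ^ (m - 1) * 2 ^ (m - 1) = 2 ^ (2 * m - 2) := (hp3 hm).symm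

lemma n_pos_low (hm : 3 ≤ m) : 0 < 2 ^ m * (2 ^ (m - 2) - 1) := by
  have h5 := hp5 hm
  have : 0 < 2 ^ m := Nat.pow_pos (by norm_num)
  exact Nat.mul_pos this (by omega)

lemma n_lt_mid (hm : 3 ≤ m) :
    2 ^ m * (2 ^ (m - 2) - 1) < 2 ^ (m - 1) * (2 ^ (m - 1) - 1) := by
  have h5 := hp5 hm
  rw [← n_mid' hm]
  have : 0 < 2 ^ (m - 1) := Nat.pow_pos (by norm_num)
  omega

lemma n_lt_high (hm : 3 ≤ m) :
    2 ^ (m - 1) * (2 ^ (m - 1) - 1) < 2 ^ (2 * m - 2) := by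
  rw [← n_mid' hm, ← n_high hm]
  have : 0 < 2 ^ (m - 1) := Nat.pow_pos (by norm_num)
  omega

lemma W_00 (hm : 3 ≤ m) (hodd : Odd m) : W m 0 0 = 0 := by
  rw [W, wt_eq_sum]
  have h := fun x => inner_count hm hodd (0 : GF m) 0 x
  simp only [if_pos rfl, eq_self_iff_true, if_true] at h
  rw [Finset.sum_congr rfl fun x _ => h x]
  exact sum_g_b0 hm

lemma W_0b (hm : 3 ≤ m) (hodd : Odd m) {b : GF m} (hb : b ≠ 0) :
    W m 0 b = 2 ^ (m - 1) * (2 ^ (m - 1) - (if Tr m b = 1 then 1 else 0)) := by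
  rw [W, wt_eq_sum]
  have h := fun x => inner_count hm hodd (0 : GF m) b x
  simp only [eq_self_iff_true, if_true] at h
  rw [Finset.sum_congr rfl fun x _ => h x]
  exact sum_g_a0 hm hb

lemma W_nr (hm : 3 ≤ m) (hodd : Odd m) {a : GF m} (ha : a ≠ 0)
    (hnr : ∀ r : GF m, r ^ 2 + a * r + 1 ≠ 0) (b : GF m) :
    W m a b = 2 ^ (m - 1) * (2 ^ (m - 1) - 1) := by
  rw [W, wt_eq_sum]
  have h := fun x => inner_count hm hodd a b x
  simp only [if_neg ha] at h
  rw [Finset.sum_congr rfl fun x _ => h x, sum_g_noroot hm ha hnr b, n_mid hm]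

lemma W_r (hm : 3 ≤ m) (hodd : Odd m) {a r : GF m} (ha : a ≠ 0)
    (hr : r ^ 2 + a * r + 1 = 0) (b : GF m) :
    W m a b = 2 ^ m * (2 ^ (m - 2) - 1)
      + ((if Tr m ((1 + b) * r) = 1 then 2 ^ (m - 1) else 0)
        + (if Tr m ((1 + b) * r⁻¹) = 1 then 2 ^ (m - 1) else 0)) := by
  rw [W, wt_eq_sum]
  have h := fun x => inner_count hm hodd a b x
  simp only [if_neg ha] at h
  rw [Finset.sum_congr rfl fun x _ => h x, sum_g_root hm ha hr b, n_low hm]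
end Aux

namespace Aux
open Finset
variable {m : ℕ}

lemma z2_01 : ((0:ZMod 2) = 1) ↔ False := by decide
lemma z2_11 : ((1:ZMod 2) = 1) ↔ True := by decide
lemma z2_00 : ((0:ZMod 2) = 0) ↔ True := by decide
lemma z2_10 : ((1:ZMod 2) = 0) ↔ False := by decide

lemma Nb_a0 (hm : 3 ≤ m) (hodd : Odd m) (w : ℕ) :
    (Finset.univ.filter fun b : GF m => W m 0 b = w).card =
      if w = 0 then 1
      else if w = 2 ^ (m - 1) * (2 ^ (m - 1) - 1) then 2 ^ (m - 1)
      else if w = 2 ^ (2 * m - 2) then 2 ^ (m - 1) - 1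
      else 0 := by
  have hMpos : 0 < 2 ^ (m - 1) * (2 ^ (m - 1) - 1) :=
    lt_trans (n_pos_low hm) (n_lt_mid hm)
  have hHpos : 0 < 2 ^ (2 * m - 2) := lt_trans hMpos (n_lt_high hm)
  have hMH : 2 ^ (m - 1) * (2 ^ (m - 1) - 1) ≠ 2 ^ (2 * m - 2) := (n_lt_high hm).ne
  have hu2 : 2 ≤ 2 ^ (m - 1) := by
    have := hp5 hm; rw [hp1 hm]; omega
  have hval : ∀ b : GF m, W m 0 b =
      if b = 0 then 0
      else if Tr m b = 1 then 2 ^ (m - 1) * (2 ^ (m - 1) - 1)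
      else 2 ^ (2 * m - 2) := by
    intro b
    by_cases hb : b = 0
    · rw [if_pos hb, hb, W_00 hm hodd]
    · rw [if_neg hb, W_0b hm hodd hb]
      by_cases htb : Tr m b = 1
      · rw [if_pos htb, if_pos htb]
      · rw [if_neg htb, if_neg htb, Nat.sub_zero, n_high' hm]
  by_cases hw0 : w = 0
  · subst hw0
    rw [if_pos rfl]
    have hset : (Finset.univ.filter fun b : GF m => W m 0 b = 0) = {0} := by
      ext b
      simp only [mem_filter, mem_univ, true_and, mem_singleton]
      rw [hval b]
      by_cases hb : b = 0
      · simp [hb]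
      · rw [if_neg hb]
        by_cases htb : Tr m b = 1 <;> simp [htb, hb] <;> omega
    rw [hset, Finset.card_singleton]
  · rw [if_neg hw0]
    by_cases hwM : w = 2 ^ (m - 1) * (2 ^ (m - 1) - 1)
    · subst hwM
      rw [if_pos rfl]
      have hset : (Finset.univ.filter fun b : GF m =>
          W m 0 b = 2 ^ (m - 1) * (2 ^ (m - 1) - 1))
          = Finset.univ.filter fun b : GF m => Tr m b = 1 := by
        apply Finset.filter_congr
        intro b _
        rw [hval b]
        by_cases hb : b = 0
        · subst hb
          rw [if_pos rfl, Tr_zero]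
          simp only [z2_01, iff_false]
          omega
        · rw [if_neg hb]
          by_cases htb : Tr m b = 1 <;> simp [htb]
          exact fun h => absurd h.symm hMH
      rw [hset]
      have hone : (Finset.univ.filter fun b : GF m => Tr m b = 1)
          = Finset.univ.filter fun b : GF m => Tr m ((1 : GF m) * b) = 1 := by
        apply Finset.filter_congr; intro b _; rw [one_mul]
      rw [hone, count1 (show m ≠ 0 by omega) one_ne_zero]
    · rw [if_neg hwM]
      by_cases hwH : w = 2 ^ (2 * m - 2)
      · subst hwH
        rw [if_pos rfl]
        have hset : (Finset.univ.filter fun b : GF m => W m 0 b = 2 ^ (2 * m - 2))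
            = (Finset.univ.filter fun b : GF m => Tr m b = 0).erase 0 := by
          ext b
          simp only [mem_filter, mem_univ, true_and, mem_erase]
          rw [hval b]
          by_cases hb : b = 0
          · subst hb
            simp only [eq_self_iff_true, if_true, ite_true, ne_eq, not_true_eq_false,
              false_and, iff_false]
            omega
          · rw [if_neg hb]
            by_cases htb : Tr m b = 1
            · rw [if_pos htb]
              constructor
              · intro h; exact absurd h hMH
              · rintro ⟨-, h⟩; rw [htb] at h; exact absurd h (by decide)
            · rw [if_neg htb]
              have htb0 : Tr m b = 0 := Or.resolve_right (zmod2_cases _) htb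
              simp [hb, htb0]
        rw [hset, Finset.card_erase_of_mem (by simp only [mem_filter, mem_univ, true_and]; exact Tr_zero)]
        have hone : (Finset.univ.filter fun b : GF m => Tr m b = 0)
            = Finset.univ.filter fun b : GF m => Tr m ((1 : GF m) * b) = 0 := by
          apply Finset.filter_congr; intro b _; rw [one_mul]
        rw [hone, count1 (show m ≠ 0 by omega) one_ne_zero]
      · rw [if_neg hwH]
        rw [Finset.filter_false_of_mem, Finset.card_empty]
        intro b _
        rw [hval b]
        by_cases hb : b = 0
        · rw [if_pos hb]; omega
        · rw [if_neg hb]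
          by_cases htb : Tr m b = 1
          · rw [if_pos htb]; exact fun h => hwM h.symm
          · rw [if_neg htb]; exact fun h => hwH h.symm

lemma Nb_nr (hm : 3 ≤ m) (hodd : Odd m) {a : GF m} (ha : a ≠ 0)
    (hnr : ∀ r : GF m, r ^ 2 + a * r + 1 ≠ 0) (w : ℕ) :
    (Finset.univ.filter fun b : GF m => W m a b = w).card =
      if w = 2 ^ (m - 1) * (2 ^ (m - 1) - 1) then 2 ^ m else 0 := by
  by_cases hwM : w = 2 ^ (m - 1) * (2 ^ (m - 1) - 1)
  · subst hwM
    rw [if_pos rfl]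
    have hset : (Finset.univ.filter fun b : GF m =>
        W m a b = 2 ^ (m - 1) * (2 ^ (m - 1) - 1)) = Finset.univ := by
      apply Finset.filter_true_of_mem
      intro b _
      exact W_nr hm hodd ha hnr b
    rw [hset, Finset.card_univ, card_GF (show m ≠ 0 by omega)]
  · rw [if_neg hwM]
    rw [Finset.filter_false_of_mem, Finset.card_empty]
    intro b _
    rw [W_nr hm hodd ha hnr b]
    exact fun h => hwM h.symm

lemma Nb_r (hm : 3 ≤ m) (hodd : Odd m) {a r : GF m} (ha : a ≠ 0)
    (hr : r ^ 2 + a * r + 1 = 0) (w : ℕ) :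
    (Finset.univ.filter fun b : GF m => W m a b = w).card =
      if w = 2 ^ m * (2 ^ (m - 2) - 1) then 2 ^ (m - 2)
      else if w = 2 ^ (m - 1) * (2 ^ (m - 1) - 1) then 2 ^ (m - 1)
      else if w = 2 ^ (2 * m - 2) then 2 ^ (m - 2)
      else 0 := by
  have hm2 : 2 ≤ m := by omega
  have hr0 := root_ne_zero hr
  have hrinv := root_inv_ne ha hr
  have hri0 : r⁻¹ ≠ 0 := inv_ne_zero hr0
  have hval := fun b => W_r hm hodd ha hr b
  have hu : 0 < 2 ^ (m - 1) := Nat.pow_pos (by norm_num)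
  have hmid := n_mid' hm
  have hhigh := n_high hm
  have hLM : 2 ^ m * (2 ^ (m - 2) - 1) ≠ 2 ^ (m - 1) * (2 ^ (m - 1) - 1) := (n_lt_mid hm).ne
  have hLH : 2 ^ m * (2 ^ (m - 2) - 1) ≠ 2 ^ (2 * m - 2) :=
    (lt_trans (n_lt_mid hm) (n_lt_high hm)).ne
  have hMH : 2 ^ (m - 1) * (2 ^ (m - 1) - 1) ≠ 2 ^ (2 * m - 2) := (n_lt_high hm).ne
  have hcount : ∀ ε1 ε2 : ZMod 2, (Finset.univ.filter fun b : GF m =>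
      Tr m ((1 + b) * r) = ε1 ∧ Tr m ((1 + b) * r⁻¹) = ε2).card = 2 ^ (m - 2) := by
    intro ε1 ε2
    have hcongr : ∀ b : GF m, (Tr m ((1 + b) * r) = ε1 ∧ Tr m ((1 + b) * r⁻¹) = ε2)
        ↔ (Tr m (r * (1 + b)) = ε1 ∧ Tr m (r⁻¹ * (1 + b)) = ε2) := by
      intro b; rw [mul_comm (1 + b) r, mul_comm (1 + b) r⁻¹]
    rw [Finset.filter_congr fun b _ => hcongr b,
      count_shift (fun y => Tr m (r * y) = ε1 ∧ Tr m (r⁻¹ * y) = ε2)]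
    exact count2 hm2 hr0 hri0 (Ne.symm hrinv) ε1 ε2
  by_cases hwL : w = 2 ^ m * (2 ^ (m - 2) - 1)
  · subst hwL
    rw [if_pos rfl]
    have hset : (Finset.univ.filter fun b : GF m => W m a b = 2 ^ m * (2 ^ (m - 2) - 1))
        = Finset.univ.filter fun b : GF m =>
          Tr m ((1 + b) * r) = 0 ∧ Tr m ((1 + b) * r⁻¹) = 0 := by
      apply Finset.filter_congr
      intro b _
      rw [hval b]
      rcases zmod2_cases (Tr m ((1 + b) * r)) with h1 | h1 <;>
        rcases zmod2_cases (Tr m ((1 + b) * r⁻¹)) with h2 | h2 <;>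
        simp [h1, h2, z2_01, z2_11, z2_00, z2_10] <;> omega
    rw [hset, hcount 0 0]
  · rw [if_neg hwL]
    by_cases hwM : w = 2 ^ (m - 1) * (2 ^ (m - 1) - 1)
    · subst hwM
      rw [if_pos rfl]
      have hset : (Finset.univ.filter fun b : GF m =>
          W m a b = 2 ^ (m - 1) * (2 ^ (m - 1) - 1))
          = Finset.univ.filter fun b : GF m =>
            (Tr m ((1 + b) * r) = 1 ∧ Tr m ((1 + b) * r⁻¹) = 0)
            ∨ (Tr m ((1 + b) * r) = 0 ∧ Tr m ((1 + b) * r⁻¹) = 1) := by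
        apply Finset.filter_congr
        intro b _
        rw [hval b, ← hmid]
        rcases zmod2_cases (Tr m ((1 + b) * r)) with h1 | h1 <;>
          rcases zmod2_cases (Tr m ((1 + b) * r⁻¹)) with h2 | h2 <;>
          simp [h1, h2, z2_01, z2_11, z2_00, z2_10] <;> omega
      rw [hset, Finset.filter_or,
        Finset.card_union_of_disjoint, hcount 1 0, hcount 0 1]
      · rw [hp1 hm]; omega
      · rw [Finset.disjoint_left]
        intro b hb1 hb2
        simp only [mem_filter, mem_univ, true_and] at hb1 hb2
        rw [hb1.1] at hb2
        exact absurd hb2.1 (by decide)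
    · rw [if_neg hwM]
      by_cases hwH : w = 2 ^ (2 * m - 2)
      · subst hwH
        rw [if_pos rfl]
        have hset : (Finset.univ.filter fun b : GF m => W m a b = 2 ^ (2 * m - 2))
            = Finset.univ.filter fun b : GF m =>
              Tr m ((1 + b) * r) = 1 ∧ Tr m ((1 + b) * r⁻¹) = 1 := by
          apply Finset.filter_congr
          intro b _
          rw [hval b, ← hhigh]
          rcases zmod2_cases (Tr m ((1 + b) * r)) with h1 | h1 <;>
            rcases zmod2_cases (Tr m ((1 + b) * r⁻¹)) with h2 | h2 <;>
            simp [h1, h2, z2_01, z2_11, z2_00, z2_10] <;> omega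
        rw [hset, hcount 1 1]
      · rw [if_neg hwH]
        rw [Finset.filter_false_of_mem, Finset.card_empty]
        intro b _
        rw [hval b]
        rcases zmod2_cases (Tr m ((1 + b) * r)) with h1 | h1 <;>
          rcases zmod2_cases (Tr m ((1 + b) * r⁻¹)) with h2 | h2 <;>
          simp only [h1, h2, z2_01, z2_11, z2_00, z2_10, if_true, if_false, iff_true, iff_false,
            if_pos, if_neg] <;>
          intro hcon
        · exact hwL (by omega)
        · exact hwM (by rw [← hmid]; omega)
        · exact hwM (by rw [← hmid]; omega)
        · exact hwH (by rw [← hhigh]; omega)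
end Aux

namespace Aux
open Finset
variable {m : ℕ}

lemma A_eq (hm : 3 ≤ m) (hodd : Odd m) (w : ℕ) :
    (Finset.univ.filter fun c : GF m × GF m => W m c.1 c.2 = w).card =
      (if w = 0 then 1
        else if w = 2 ^ (m - 1) * (2 ^ (m - 1) - 1) then 2 ^ (m - 1)
        else if w = 2 ^ (2 * m - 2) then 2 ^ (m - 1) - 1
        else 0)
      + (2 ^ (m - 1) - 1) *
        (if w = 2 ^ m * (2 ^ (m - 2) - 1) then 2 ^ (m - 2)
          else if w = 2 ^ (m - 1) * (2 ^ (m - 1) - 1) then 2 ^ (m - 1)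
          else if w = 2 ^ (2 * m - 2) then 2 ^ (m - 2)
          else 0)
      + 2 ^ (m - 1) * (if w = 2 ^ (m - 1) * (2 ^ (m - 1) - 1) then 2 ^ m else 0) := by
  rw [card_prod_split]
  rw [← Finset.sum_erase_add Finset.univ _ (Finset.mem_univ (0 : GF m))]
  rw [← Finset.sum_filter_add_sum_filter_not (Finset.univ.erase (0 : GF m))
    (fun a => ∃ x : GF m, x ^ 2 + a * x + 1 = 0)]
  have h1 : ∀ a ∈ (Finset.univ.erase (0 : GF m)).filter
      (fun a => ∃ x : GF m, x ^ 2 + a * x + 1 = 0),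
      (Finset.univ.filter fun b : GF m => W m a b = w).card =
      (if w = 2 ^ m * (2 ^ (m - 2) - 1) then 2 ^ (m - 2)
        else if w = 2 ^ (m - 1) * (2 ^ (m - 1) - 1) then 2 ^ (m - 1)
        else if w = 2 ^ (2 * m - 2) then 2 ^ (m - 2)
        else 0) := by
    intro a haf
    simp only [mem_filter, mem_erase, mem_univ, true_and, and_true] at haf
    obtain ⟨ha, r, hr⟩ := haf
    exact Nb_r hm hodd ha hr w
  have h2 : ∀ a ∈ (Finset.univ.erase (0 : GF m)).filter
      (fun a => ¬∃ x : GF m, x ^ 2 + a * x + 1 = 0),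
      (Finset.univ.filter fun b : GF m => W m a b = w).card =
      (if w = 2 ^ (m - 1) * (2 ^ (m - 1) - 1) then 2 ^ m else 0) := by
    intro a haf
    simp only [mem_filter, mem_erase, mem_univ, true_and, and_true] at haf
    obtain ⟨ha, hnr⟩ := haf
    push_neg at hnr
    exact Nb_nr hm hodd ha (fun r => hnr r) w
  rw [Finset.sum_congr rfl h1, Finset.sum_congr rfl h2, Finset.sum_const, Finset.sum_const,
    Nb_a0 hm hodd w, smul_eq_mul, smul_eq_mul]
  have hcard1 : ((Finset.univ.erase (0 : GF m)).filter
      (fun a => ∃ x : GF m, x ^ 2 + a * x + 1 = 0)).card = 2 ^ (m - 1) - 1 := by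
    have : ((Finset.univ.erase (0 : GF m)).filter
        (fun a => ∃ x : GF m, x ^ 2 + a * x + 1 = 0))
        = Finset.univ.filter fun a : GF m => a ≠ 0 ∧ ∃ x : GF m, x ^ 2 + a * x + 1 = 0 := by
      ext a
      simp only [mem_filter, mem_erase, mem_univ, true_and, and_true]
    rw [this, card_good_a (show m ≠ 0 by omega)]
  have hcard2 : ((Finset.univ.erase (0 : GF m)).filter
      (fun a => ¬∃ x : GF m, x ^ 2 + a * x + 1 = 0)).card = 2 ^ (m - 1) := by
    rw [Finset.filter_not, Finset.card_sdiff_of_subset (Finset.filter_subset _ _)]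
    rw [hcard1, Finset.card_erase_of_mem (Finset.mem_univ _), Finset.card_univ,
      card_GF (show m ≠ 0 by omega)]
    have hu2 : 2 ≤ 2 ^ (m - 1) := by
      have := hp5 hm; rw [hp1 hm]; omega
    have h2m : 2 ^ m = 2 * 2 ^ (m - 1) := by rw [← pow_succ']; congr 1; omega
    omega
  rw [hcard1, hcard2]
  ring

lemma W_zero_iff (hm : 3 ≤ m) (hodd : Odd m) (a b : GF m) :
    W m a b = 0 ↔ a = 0 ∧ b = 0 := by
  have hu : 0 < 2 ^ (m - 1) := Nat.pow_pos (by norm_num)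
  have hu2 : 2 ≤ 2 ^ (m - 1) := by
    have := hp5 hm; rw [hp1 hm]; omega
  have hLpos := n_pos_low hm
  constructor
  · intro h
    by_cases ha : a = 0
    · subst ha
      refine ⟨rfl, ?_⟩
      by_contra hb
      rw [W_0b hm hodd hb] at h
      rcases Nat.mul_eq_zero.mp h with h' | h'
      · omega
      · split_ifs at h' <;> omega
    · exfalso
      by_cases hex : ∃ r : GF m, r ^ 2 + a * r + 1 = 0
      · obtain ⟨r, hr⟩ := hex
        rw [W_r hm hodd ha hr b] at h
        omega
      · push_neg at hex
        rw [W_nr hm hodd ha hex b] at h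
        have := n_lt_mid hm
        omega
  · rintro ⟨rfl, rfl⟩
    exact W_00 hm hodd

lemma W_mem (hm : 3 ≤ m) (hodd : Odd m) (a b : GF m) :
    W m a b = 0 ∨ W m a b = 2 ^ m * (2 ^ (m - 2) - 1)
      ∨ W m a b = 2 ^ (m - 1) * (2 ^ (m - 1) - 1) ∨ W m a b = 2 ^ (2 * m - 2) := by
  by_cases ha : a = 0
  · subst ha
    by_cases hb : b = 0
    · subst hb; left; exact W_00 hm hodd
    · rw [W_0b hm hodd hb]
      by_cases htb : Tr m b = 1
      · rw [if_pos htb]; right; right; left; rfl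
      · rw [if_neg htb, Nat.sub_zero, n_high' hm]; right; right; right; rfl
  · by_cases hex : ∃ r : GF m, r ^ 2 + a * r + 1 = 0
    · obtain ⟨r, hr⟩ := hex
      rw [W_r hm hodd ha hr b]
      rcases zmod2_cases (Tr m ((1 + b) * r)) with h1 | h1 <;>
        rcases zmod2_cases (Tr m ((1 + b) * r⁻¹)) with h2 | h2 <;>
        simp only [h1, h2, z2_01, z2_11, z2_00, z2_10, if_true, if_false, iff_true, iff_false]
      all_goals (have hmid := n_mid' hm; have hhigh := n_high hm)
      · right; left; omega
      · right; right; left; omega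
      · right; right; left; omega
      · right; right; right; omega
    · push_neg at hex
      rw [W_nr hm hodd ha hex b]
      right; right; left; rfl
end Aux


open Finset Aux in
theorem stmt13 (m : ℕ) (hm : 3 ≤ m) (hodd : Odd m) :
    let D2 : Finset (GaloisField 2 m × GaloisField 2 m) :=
      Finset.univ.filter (fun p => p.1 ≠ 0 ∧ Tr m (p.2 * p.1 ^ 2 + p.1 + p.2) = 0)
    let wt : GaloisField 2 m × GaloisField 2 m → ℕ := fun c =>
      (D2.filter (fun p => Tr m (c.1 * p.1 * p.2 + c.2 * p.1) = 1)).card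
    let A : ℕ → ℕ := fun w =>
      (Finset.univ.filter (fun c : GaloisField 2 m × GaloisField 2 m => wt c = w)).card
    A 0 = 1 ∧
    (∀ c : GaloisField 2 m × GaloisField 2 m, wt c = 0 → c = (0, 0)) ∧
    A (2 ^ m * (2 ^ (m - 2) - 1)) = 2 ^ (m - 2) * (2 ^ (m - 1) - 1) ∧
    A (2 ^ (m - 1) * (2 ^ (m - 1) - 1)) = 3 * 2 ^ (2 * m - 2) ∧
    A (2 ^ (2 * m - 2)) = 2 ^ (m - 2) * (2 ^ (m - 1) + 1) - 1 ∧
    (∀ w : ℕ, w ≠ 0 → w ≠ 2 ^ m * (2 ^ (m - 2) - 1) →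
      w ≠ 2 ^ (m - 1) * (2 ^ (m - 1) - 1) → w ≠ 2 ^ (2 * m - 2) → A w = 0) ∧
    D2.card = 2 ^ m * (2 ^ (m - 1) - 1) ∧
    (Finset.univ.image (fun c : GaloisField 2 m × GaloisField 2 m =>
        fun p : GaloisField 2 m × GaloisField 2 m =>
          if p ∈ D2 then Tr m (c.1 * p.1 * p.2 + c.2 * p.1) else 0)).card = 2 ^ (2 * m) ∧
    (∀ c : GaloisField 2 m × GaloisField 2 m, c ≠ (0, 0) →
      2 ^ m * (2 ^ (m - 2) - 1) ≤ wt c) ∧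
    (∃ c : GaloisField 2 m × GaloisField 2 m, wt c = 2 ^ m * (2 ^ (m - 2) - 1)) ∧
    ((Finset.univ.image (fun c : GaloisField 2 m × GaloisField 2 m => wt c)).erase 0).card
      = 3 := by
  intro D2 wt A
  have hwtW : ∀ c : GaloisField 2 m × GaloisField 2 m, wt c = W m c.1 c.2 := fun c => rfl
  have hA : ∀ w, A w = (Finset.univ.filter
      fun c : GF m × GF m => W m c.1 c.2 = w).card := by
    intro w
    exact congrArg Finset.card (Finset.filter_congr fun c _ => by rw [hwtW c])
  -- numeric facts
  have hu : 0 < 2 ^ (m - 1) := Nat.pow_pos (by norm_num)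
  have ht : 0 < 2 ^ (m - 2) := Nat.pow_pos (by norm_num)
  have hu2 : 2 ≤ 2 ^ (m - 1) := by have := hp5 hm; rw [hp1 hm]; omega
  have hLpos := n_pos_low hm
  have hLM := n_lt_mid hm
  have hMH := n_lt_high hm
  have hLH := lt_trans hLM hMH
  have hMpos := lt_trans hLpos hLM
  have hHpos := lt_trans hLpos hLH
  -- attainers
  obtain ⟨a0, ha0mem⟩ := Finset.card_pos.mp (show 0 < (Finset.univ.filter
      fun a : GF m => a ≠ 0 ∧ ∃ r : GF m, r ^ 2 + a * r + 1 = 0).card by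
    rw [card_good_a (show m ≠ 0 by omega)]; omega)
  simp only [mem_filter, mem_univ, true_and] at ha0mem
  obtain ⟨ha0, r0, hr0⟩ := ha0mem
  have hattain : ∀ w0 : ℕ, (if w0 = 2 ^ m * (2 ^ (m - 2) - 1) then 2 ^ (m - 2)
      else if w0 = 2 ^ (m - 1) * (2 ^ (m - 1) - 1) then 2 ^ (m - 1)
      else if w0 = 2 ^ (2 * m - 2) then 2 ^ (m - 2)
      else 0) > 0 → ∃ b : GF m, W m a0 b = w0 := by
    intro w0 hpos
    have := Nb_r hm hodd ha0 hr0 w0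
    obtain ⟨b, hb⟩ := Finset.card_pos.mp (by rw [this]; exact hpos)
    simp only [mem_filter, mem_univ, true_and] at hb
    exact ⟨b, hb⟩
  have hattL : ∃ b : GF m, W m a0 b = 2 ^ m * (2 ^ (m - 2) - 1) := by
    apply hattain; rw [if_pos rfl]; omega
  have hattM : ∃ b : GF m, W m a0 b = 2 ^ (m - 1) * (2 ^ (m - 1) - 1) := by
    apply hattain; rw [if_neg hLM.ne', if_pos rfl]; omega
  have hattH : ∃ b : GF m, W m a0 b = 2 ^ (2 * m - 2) := by
    apply hattain; rw [if_neg hLH.ne', if_neg hMH.ne', if_pos rfl]; omega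
  refine ⟨?_, ?_, ?_, ?_, ?_, ?_, ?_, ?_, ?_, ?_, ?_⟩
  · -- A 0 = 1
    rw [hA, A_eq hm hodd, if_pos rfl, if_neg hLpos.ne, if_neg hMpos.ne, if_neg hHpos.ne,
      if_neg hMpos.ne]
    simp
  · -- wt c = 0 → c = (0,0)
    intro c h
    rw [hwtW] at h
    obtain ⟨h1, h2⟩ := (W_zero_iff hm hodd c.1 c.2).mp h
    exact Prod.ext h1 h2
  · -- A LOW
    rw [hA, A_eq hm hodd, if_neg hLpos.ne', if_neg hLM.ne, if_neg hLH.ne, if_pos rfl,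
      if_neg hLM.ne]
    simp [mul_comm]
  · -- A MID
    rw [hA, A_eq hm hodd, if_neg hMpos.ne', if_pos rfl, if_neg hLM.ne', if_pos rfl, if_pos rfl]
    have h2m : 2 ^ m = 2 * 2 ^ (m - 1) := by rw [← pow_succ']; congr 1; omega
    rw [h2m, hp3 hm]
    zify [show 1 ≤ 2 ^ (m - 1) by omega]
    ring
  · -- A HIGH
    rw [hA, A_eq hm hodd, if_neg hHpos.ne', if_neg hMH.ne', if_pos rfl, if_neg hLH.ne',
      if_neg hMH.ne', if_pos rfl, if_neg hMH.ne']
    have e : 2 ^ (m - 1) = 2 * 2 ^ (m - 2) := hp1 hm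
    rw [e, Nat.mul_zero, Nat.add_zero]
    zify [show 1 ≤ 2 * 2 ^ (m - 2) by omega,
      show 1 ≤ 2 ^ (m - 2) * (2 * 2 ^ (m - 2) + 1) from Nat.mul_pos ht (by omega)]
    ring
  · -- other w
    intro w hw0 hwL hwM hwH
    rw [hA, A_eq hm hodd, if_neg hw0, if_neg hwM, if_neg hwH, if_neg hwL, if_neg hwM,
      if_neg hwH, if_neg hwM]
    simp
  · -- D2.card
    exact D2_card hm hodd
  · -- image card
    have hinj : Function.Injective (fun c : GaloisField 2 m × GaloisField 2 m =>
        fun p : GaloisField 2 m × GaloisField 2 m =>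
          if p ∈ D2 then Tr m (c.1 * p.1 * p.2 + c.2 * p.1) else 0) := by
      intro c1 c2 h
      have hW0 : W m (c1.1 + c2.1) (c1.2 + c2.2) = 0 := by
        rw [W]
        rw [Finset.card_eq_zero.mpr]
        apply Finset.filter_false_of_mem
        intro p hp
        have hpD : p ∈ D2 := hp
        have heq := congrFun h p
        simp only [if_pos hpD] at heq
        have e : (c1.1 + c2.1) * p.1 * p.2 + (c1.2 + c2.2) * p.1
            = (c1.1 * p.1 * p.2 + c1.2 * p.1) + (c2.1 * p.1 * p.2 + c2.2 * p.1) := by ring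
        rw [e, Tr_add, heq]
        intro hcon
        have : ∀ v : ZMod 2, v + v ≠ 1 := by decide
        exact this _ hcon
      obtain ⟨h1, h2⟩ := (W_zero_iff hm hodd _ _).mp hW0
      have e1 : c1.1 = c2.1 := add_eq_zero_iff.mp h1
      have e2 : c1.2 = c2.2 := add_eq_zero_iff.mp h2
      exact Prod.ext e1 e2
    rw [Finset.card_image_of_injective _ hinj, Finset.card_univ, Fintype.card_prod,
      card_GF (show m ≠ 0 by omega), two_mul, pow_add]
  · -- min weight
    intro c hc
    rw [hwtW]
    rcases W_mem hm hodd c.1 c.2 with h | h | h | h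
    · exfalso
      obtain ⟨h1, h2⟩ := (W_zero_iff hm hodd _ _).mp h
      exact hc (Prod.ext h1 h2)
    · omega
    · omega
    · omega
  · -- existence of min weight codeword
    obtain ⟨b, hb⟩ := hattL
    exact ⟨(a0, b), by rw [hwtW]; exact hb⟩
  · -- three nonzero weights
    have himg : (Finset.univ.image
        (fun c : GaloisField 2 m × GaloisField 2 m => wt c)).erase 0
        = {2 ^ m * (2 ^ (m - 2) - 1), 2 ^ (m - 1) * (2 ^ (m - 1) - 1), 2 ^ (2 * m - 2)} := by
      ext w
      simp only [Finset.mem_erase, Finset.mem_image, Finset.mem_univ, true_and,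
        Finset.mem_insert, Finset.mem_singleton]
      constructor
      · rintro ⟨hw0, c, rfl⟩
        rw [hwtW] at hw0 ⊢
        rcases W_mem hm hodd c.1 c.2 with h | h | h | h
        · exact absurd h hw0
        · exact Or.inl h
        · exact Or.inr (Or.inl h)
        · exact Or.inr (Or.inr h)
      · rintro (rfl | rfl | rfl)
        · obtain ⟨b, hb⟩ := hattL
          exact ⟨hLpos.ne', ⟨(a0, b), by rw [hwtW]; exact hb⟩⟩
        · obtain ⟨b, hb⟩ := hattM
          exact ⟨hMpos.ne', ⟨(a0, b), by rw [hwtW]; exact hb⟩⟩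
        · obtain ⟨b, hb⟩ := hattH
          exact ⟨hHpos.ne', ⟨(a0, b), by rw [hwtW]; exact hb⟩⟩
    rw [himg]
    rw [Finset.card_insert_of_notMem (by
        simp only [Finset.mem_insert, Finset.mem_singleton]
        push_neg
        exact ⟨hLM.ne, hLH.ne⟩),
      Finset.card_insert_of_notMem (by
        simp only [Finset.mem_singleton]
        exact hMH.ne),
      Finset.card_singleton]
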